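/- Let G be a finite simple graph and L a list assignment with |L(v)| ≥ 5 for every vertex v. Let P = v_1⋯v_p be an induced path in G, let i be an index with 1 ≤ i ≤ p−2, and let x be a vertex of G whose set of neighbours on P is exactly {v_i, v_{i+1}, v_{i+2}}. Let φ be an L-colouring of the subgraph of G induced by V(P)∖{v_i}. If i = 1, or if φ(v_{i−1}) = φ(v_{i+1}), then φ can be extended to v_i (choosing φ(v_i) ∈ L(v_i)) so that the resulting map is an L-colouring of P and x is safe, i.e. |L(x) ∖ {φ(v_i), φ(v_{i+1}), φ(v_{i+2})}| ≥ 3. -/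

import Mathlib

open scoped Classical

variable {V : Type*}

/-- `v 1, …, v p` is an induced path in `G`: the vertices with indices `1 ≤ i ≤ p` are
pairwise distinct and two of them are adjacent iff their indices are consecutive. -/
def IsInducedPath (G : SimpleGraph V) (p : ℕ) (v : ℕ → V) : Prop :=
  (∀ i j : ℕ, 1 ≤ i → i ≤ p → 1 ≤ j → j ≤ p → v i = v j → i = j) ∧
  (∀ i j : ℕ, 1 ≤ i → i ≤ p → 1 ≤ j → j ≤ p →
    (G.Adj (v i) (v j) ↔ (i + 1 = j ∨ j + 1 = i)))

/-- The set of path indices `1 ≤ i ≤ p` with `v i` adjacent to `z`;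
its image under `v` is `N_P(z)`. -/
noncomputable def nbrIdx (G : SimpleGraph V) (p : ℕ) (v : ℕ → V) (z : V) : Finset ℕ :=
  (Finset.Icc 1 p).filter fun i => G.Adj z (v i)

/-- `z` is adjacent to `[v i] = {v (i-1), v i, v (i+1)}` (which exists for `2 ≤ i ≤ p-1`). -/
def AdjBracket (G : SimpleGraph V) (p : ℕ) (v : ℕ → V) (i : ℕ) (z : V) : Prop :=
  2 ≤ i ∧ i < p ∧ G.Adj z (v (i - 1)) ∧ G.Adj z (v i) ∧ G.Adj z (v (i + 1))

/-- The number of vertices adjacent to `[v i]`. -/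
noncomputable def bracketCount [Fintype V] (G : SimpleGraph V) (p : ℕ) (v : ℕ → V)
    (i : ℕ) : ℕ :=
  (Finset.univ.filter fun z : V => AdjBracket G p v i z).card

/-- The number of vertices adjacent to `[v i]` or to `[v j]`. -/
noncomputable def bracketPairCount [Fintype V] (G : SimpleGraph V) (p : ℕ) (v : ℕ → V)
    (i j : ℕ) : ℕ :=
  (Finset.univ.filter fun z : V => AdjBracket G p v i z ∨ AdjBracket G p v j z).card

/-- A nice path: an induced path such that (a) every vertex with at least three neighbours
on the path is adjacent to exactly some `[v i]`, and (b) at most two vertices are adjacent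
to each `[v i]`, and if two are, at most one vertex is adjacent to `[v (i-1)]` or `[v (i+1)]`. -/
def IsNicePath [Fintype V] (G : SimpleGraph V) (p : ℕ) (v : ℕ → V) : Prop :=
  IsInducedPath G p v ∧
  (∀ z : V, 3 ≤ (nbrIdx G p v z).card →
    ∃ i : ℕ, 2 ≤ i ∧ i < p ∧ nbrIdx G p v z = {i - 1, i, i + 1}) ∧
  (∀ i : ℕ, bracketCount G p v i ≤ 2 ∧
    (bracketCount G p v i = 2 → bracketPairCount G p v (i - 1) (i + 1) ≤ 1))

/-- A great path: a nice path satisfying in addition condition (c). -/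
def IsGreatPath [Fintype V] (G : SimpleGraph V) (p : ℕ) (v : ℕ → V) : Prop :=
  IsNicePath G p v ∧
  ∀ i j : ℕ, i < j → bracketCount G p v i = 2 → bracketCount G p v j = 2 →
    bracketPairCount G p v (i + 1) (j - 1) ≤ 1

/-- A good path: either a great path, or `p ≥ 4` and there is a vertex `z ∈ Z_P` adjacent
to `v 1` with `{v 1, v 4} ⊆ N_P(z) ⊆ {v 1, v 2, v 3, v 4}` satisfying the three conditions. -/
def IsGoodPath [Fintype V] (G : SimpleGraph V) (p : ℕ) (v : ℕ → V) : Prop :=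
  IsGreatPath G p v ∨
  (4 ≤ p ∧ IsInducedPath G p v ∧ ∃ z : V,
    3 ≤ (nbrIdx G p v z).card ∧
    G.Adj z (v 1) ∧ G.Adj z (v 4) ∧ nbrIdx G p v z ⊆ {1, 2, 3, 4} ∧
    IsGreatPath (G.deleteEdges {s(v 1, z)}) p v ∧
    (2 ≤ (Finset.univ.filter fun t : V => t ≠ z ∧ AdjBracket G p v 2 t).card →
      nbrIdx G p v z = {1, 3, 4} ∧ ∀ t : V, ¬ AdjBracket G p v 3 t) ∧
    (2 ≤ (Finset.univ.filter fun t : V => t ≠ z ∧ AdjBracket G p v 3 t).card →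
      nbrIdx G p v z = {1, 2, 4} ∧ ∀ t : V, ¬ AdjBracket G p v 2 t))

/-- An `L`-colouring of the path `v 1 ⋯ v p` (recording the colour of `v i` as `φ i`):
each colour belongs to the corresponding list and consecutive vertices get distinct colours
(for an induced path these are the only adjacent pairs on the path). -/
def IsPathColouring (G : SimpleGraph V) (L : V → Finset ℕ) (p : ℕ) (v : ℕ → V)
    (φ : ℕ → ℕ) : Prop :=
  (∀ i : ℕ, 1 ≤ i → i ≤ p → φ i ∈ L (v i)) ∧
  (∀ i : ℕ, 1 ≤ i → i + 1 ≤ p → φ i ≠ φ (i + 1))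

/-- if `x` has neighbourhood exactly `{v i, v (i+1), v (i+2)}` on the induced
path `P = v 1 ⋯ v p`, and `φ` is an `L`-colouring of `P` minus `v i` with `i = 1` or
`φ (i-1) = φ (i+1)`, then `φ` extends to `v i` so that `x` is safe. -/
theorem extend_colouring_keeping_x_safe (G : SimpleGraph V) (L : V → Finset ℕ)
    (hL : ∀ w : V, 5 ≤ (L w).card)
    (p : ℕ) (v : ℕ → V) (hP : IsInducedPath G p v)
    (i : ℕ) (hi1 : 1 ≤ i) (hi2 : i + 2 ≤ p)
    (x : V)
    (hx : ∀ j : ℕ, 1 ≤ j → j ≤ p → (G.Adj x (v j) ↔ (j = i ∨ j = i + 1 ∨ j = i + 2)))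
    (φ : ℕ → ℕ)
    (hφmem : ∀ j : ℕ, 1 ≤ j → j ≤ p → j ≠ i → φ j ∈ L (v j))
    (hφprop : ∀ j : ℕ, 1 ≤ j → j + 1 ≤ p → j ≠ i → j + 1 ≠ i → φ j ≠ φ (j + 1))
    (hcond : i = 1 ∨ φ (i - 1) = φ (i + 1)) :
    ∃ c ∈ L (v i),
      IsPathColouring G L p v (Function.update φ i c) ∧
      3 ≤ (L x \ {c, φ (i + 1), φ (i + 2)}).card := by
  classical
  set a := φ (i+1) with ha
  set b := φ (i+2) with hb
  set A := L x \ {a, b} with hA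
  have hA3 : 3 ≤ A.card := by
    have h1 : (L x).card - ({a,b} : Finset ℕ).card ≤ A.card := Finset.le_card_sdiff _ _
    have h2 : ({a,b} : Finset ℕ).card ≤ 2 := by
      apply le_trans (Finset.card_insert_le _ _); simp
    have := hL x
    omega
  set F : Finset ℕ := if 4 ≤ A.card then {a} else insert a A with hF
  have hFcard : F.card ≤ 4 := by
    by_cases h : 4 ≤ A.card
    · simp [hF, h]
    · have h3 : A.card ≤ 3 := by omega
      simp only [hF, if_neg h]
      calc (insert a A).card ≤ A.card + 1 := Finset.card_insert_le _ _
        _ ≤ 4 := by omega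
  have haF : a ∈ F := by
    by_cases h : 4 ≤ A.card <;> simp [hF, h]
  obtain ⟨c, hc⟩ : (L (v i) \ F).Nonempty := by
    rw [← Finset.card_pos]
    have h1 := Finset.le_card_sdiff F (L (v i))
    have := hL (v i)
    omega
  rw [Finset.mem_sdiff] at hc
  have hcLvi := hc.1
  have hcF := hc.2
  have hca : c ≠ a := fun h => hcF (h ▸ haF)
  refine ⟨c, hcLvi, ⟨?_, ?_⟩, ?_⟩
  · intro j hj1 hjp
    by_cases h : j = i
    · subst h; simpa using hcLvi
    · rw [Function.update_of_ne h]; exact hφmem j hj1 hjp h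
  · intro j hj1 hjp
    by_cases h : j = i
    · subst h
      rw [Function.update_self, Function.update_of_ne (by omega)]
      exact hca
    · by_cases h' : j + 1 = i
      · rw [Function.update_of_ne h, h', Function.update_self]
        rcases hcond with h1 | heq
        · omega
        · have hji : j = i - 1 := by omega
          rw [hji, heq]; exact hca.symm
      · rw [Function.update_of_ne h, Function.update_of_ne h']
        exact hφprop j hj1 hjp h h'
  · have hset : L x \ {c, a, b} = A.erase c := by
      rw [hA]; ext y
      simp only [Finset.mem_sdiff, Finset.mem_erase, Finset.mem_insert, Finset.mem_singleton]
      tauto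
    rw [hset]
    by_cases h : 4 ≤ A.card
    · have := Finset.pred_card_le_card_erase (s := A) (a := c)
      omega
    · have hcA : c ∉ A := fun hmem => hcF (by simp [hF, if_neg h]; tauto)
      rw [Finset.erase_eq_of_notMem hcA]
      omega
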